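/- If the dichromatic number of a digraph D is at most k, then there is a linear ordering of V(D) such that every directed path consisting only of backward arcs has at most k vertices. -/

import Mathlib

/-- A digraph: no loops, no parallel arcs, no anti-parallel arcs. -/
structure Digr (V : Type) where
  Adj : V → V → Prop
  no_anti : ∀ u v : V, Adj u v → ¬ Adj v u

namespace Digr

variable {V : Type}

/-- Adjacency in the underlying undirected graph. -/
def Adjd (D : Digr V) (u v : V) : Prop := D.Adj u v ∨ D.Adj v u

/-- `c : ZMod n → V` is a directed cycle of length `n` (as a subdigraph). -/
def IsDiCycle (D : Digr V) {n : ℕ} (c : ZMod n → V) : Prop :=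
  0 < n ∧ Function.Injective c ∧ ∀ i : ZMod n, D.Adj (c i) (c (i + 1))

/-- `S` induces an acyclic subdigraph. -/
def AcyclicOn (D : Digr V) (S : Set V) : Prop :=
  ¬ ∃ (n : ℕ) (c : ZMod n → V), D.IsDiCycle c ∧ ∀ i : ZMod n, c i ∈ S

/-- The dichromatic number of `D` is at most `k`. -/
def DichromAtMost (D : Digr V) (k : ℕ) : Prop :=
  ∃ f : V → Fin k, ∀ i : Fin k, D.AcyclicOn {v | f v = i}

/-- The subdigraph induced on a set of vertices. -/
def induce (D : Digr V) (S : Set V) : Digr S :=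
  ⟨fun a b => D.Adj a.1 b.1, fun a b h => D.no_anti a.1 b.1 h⟩

/-- Out-neighbourhood of a set: vertices outside `X` with an in-neighbour in `X`. -/
def Nout (D : Digr V) (X : Set V) : Set V := {y | y ∉ X ∧ ∃ x ∈ X, D.Adj x y}

/-- In-neighbourhood of a set: vertices outside `X` with an out-neighbour in `X`. -/
def Nin (D : Digr V) (X : Set V) : Set V := {y | y ∉ X ∧ ∃ x ∈ X, D.Adj y x}

/-- Iterated neighbourhood levels: `(N_k⁺(X), N_k⁻(X), ⋃_{i ≤ k} N_i(X))`. -/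
def levAux (D : Digr V) (X : Set V) : ℕ → Set V × Set V × Set V
  | 0 => (X, X, X)
  | k + 1 =>
    let t := levAux D X k
    (D.Nout t.1 \ t.2.2, D.Nin t.2.1 \ t.2.2,
      t.2.2 ∪ (D.Nout t.1 \ t.2.2) ∪ (D.Nin t.2.1 \ t.2.2))

/-- `N_k⁺(X)`. -/
def NlevP (D : Digr V) (X : Set V) (k : ℕ) : Set V := (D.levAux X k).1

/-- `N_k⁻(X)`. -/
def NlevM (D : Digr V) (X : Set V) (k : ℕ) : Set V := (D.levAux X k).2.1

/-- `N_k(X) = N_k⁺(X) ∪ N_k⁻(X)`. -/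
def Nlev (D : Digr V) (X : Set V) (k : ℕ) : Set V := D.NlevP X k ∪ D.NlevM X k

/-- `a → b → c → d` is an induced directed path on 4 vertices. -/
def InducedP4 (D : Digr V) (a b c d : V) : Prop :=
  D.Adj a b ∧ D.Adj b c ∧ D.Adj c d ∧ a ≠ c ∧ a ≠ d ∧ b ≠ d ∧
    ¬ D.Adjd a c ∧ ¬ D.Adjd a d ∧ ¬ D.Adjd b d

/-- `p` is an induced directed path on 6 vertices. -/
def InducedP6 (D : Digr V) (p : Fin 6 → V) : Prop :=
  Function.Injective p ∧ (∀ i : Fin 5, D.Adj (p i.castSucc) (p i.succ)) ∧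
    ∀ i j : Fin 6, (i : ℕ) + 1 < (j : ℕ) → ¬ D.Adjd (p i) (p j)

/-- The underlying undirected graph has no triangle. -/
def TriangleFree (D : Digr V) : Prop :=
  ¬ ∃ a b c : V, D.Adjd a b ∧ D.Adjd b c ∧ D.Adjd a c

/-- A dipolar set. -/
def Dipolar (D : Digr V) (S : Set V) : Prop :=
  ∀ x ∈ S, (∀ y, D.Adj x y → y ∈ S) ∨ (∀ y, D.Adj y x → y ∈ S)

/-- A directed path all of whose arcs are backward with respect to the order `lt`. -/
def BackwardPath (D : Digr V) (lt : V → V → Prop) {m : ℕ} (p : Fin m → V) : Prop :=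
  Function.Injective p ∧
    ∀ i : ℕ, ∀ h : i + 1 < m,
      D.Adj (p ⟨i, Nat.lt_of_succ_lt h⟩) (p ⟨i + 1, h⟩) ∧
        lt (p ⟨i + 1, h⟩) (p ⟨i, Nat.lt_of_succ_lt h⟩)

end Digr

open Digr

/-- In an acyclic induced subdigraph, there is no closed walk. -/
lemma no_closed_walk {V : Type} (D : Digr V) (S : Set V) (hS : D.AcyclicOn S)
    (R : V → V → Prop) (hR : ∀ a b, R a b → D.Adj a b ∧ a ∈ S) :
    ∀ n : ℕ, 0 < n → ∀ w : ℕ → V, (∀ i < n, R (w i) (w (i + 1))) → w 0 = w n → False := by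
  intro n
  induction n using Nat.strong_induction_on with
  | _ n IH =>
    intro hn w harc hclosed
    by_cases hinj : ∃ i j, i < j ∧ j < n ∧ w i = w j
    · obtain ⟨i, j, hij, hjn, heq⟩ := hinj
      refine IH (j - i) (lt_of_le_of_lt (Nat.sub_le _ _) hjn) (Nat.sub_pos_of_lt hij)
        (fun t => w (i + t)) ?_ ?_
      · intro t ht
        have h1 : i + t < j := by omega
        have := harc (i + t) (by omega)
        simpa [Nat.add_assoc] using this
      · simp only [Nat.add_zero]
        rw [Nat.add_sub_cancel' (le_of_lt hij)]
        exact heq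
    · push_neg at hinj
      haveI : NeZero n := ⟨by omega⟩
      apply hS
      refine ⟨n, fun i => w i.val, ⟨hn, ?_, ?_⟩, ?_⟩
      · intro i j hij
        by_contra hne
        have hvi : i.val < n := ZMod.val_lt i
        have hvj : j.val < n := ZMod.val_lt j
        have hvne : i.val ≠ j.val := fun h => hne (ZMod.val_injective n h)
        rcases Nat.lt_or_ge i.val j.val with h | h
        · exact hinj i.val j.val h hvj hij
        · exact hinj j.val i.val (lt_of_le_of_ne h hvne.symm) hvi hij.symm
      · intro i
        have hvi : i.val < n := ZMod.val_lt i
        have hval : (i + 1).val = (i.val + 1) % n := by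
          rw [ZMod.val_add]
          have h1 : (1 : ZMod n).val = 1 % n := by
            have : ((1 : ℕ) : ZMod n).val = 1 % n := ZMod.val_natCast n 1
            simpa using this
          rw [h1, Nat.add_mod_mod]
        have hadj : D.Adj (w i.val) (w (i.val + 1)) := (hR _ _ (harc i.val hvi)).1
        show D.Adj (w i.val) (w (i + 1).val)
        rcases Nat.lt_or_ge (i.val + 1) n with h | h
        · rw [hval, Nat.mod_eq_of_lt h]; exact hadj
        · have h2 : i.val + 1 = n := by omega
          have : (i + 1).val = 0 := by rw [hval, h2, Nat.mod_self]
          rw [this, hclosed]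
          rw [h2] at hadj
          exact hadj
      · intro i
        exact (hR _ _ (harc i.val (ZMod.val_lt i))).2

/-- Extract a walk from a transitive closure. -/
lemma transGen_to_walk {V : Type} {R : V → V → Prop} {a b : V}
    (h : Relation.TransGen R a b) :
    ∃ n : ℕ, 0 < n ∧ ∃ w : ℕ → V, w 0 = a ∧ w n = b ∧ ∀ i < n, R (w i) (w (i + 1)) := by
  induction h with
  | @single c hac =>
    refine ⟨1, Nat.one_pos, fun t => if t = 0 then a else c, by simp, by simp, ?_⟩
    intro i hi
    interval_cases i
    simpa using hac
  | @tail b c hab hbc IH =>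
    obtain ⟨n, hn, w, hw0, hwn, harc⟩ := IH
    refine ⟨n + 1, Nat.succ_pos n, fun t => if t ≤ n then w t else c, by simp [hw0], ?_, ?_⟩
    · simp
    · intro i hi
      rcases Nat.lt_or_ge i n with h | h
      · have h1 : i ≤ n := le_of_lt h
        have h2 : i + 1 ≤ n := h
        simp only [if_pos h1, if_pos h2]
        exact harc i h
      · have h2 : i = n := by omega
        subst h2
        simp only [le_refl, if_pos, if_neg (by omega : ¬ i + 1 ≤ i)]
        rw [hwn]
        exact hbc

/-- If `χ⃗(D) ≤ k` then there is a linear ordering of the vertices such that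
every backward directed path has at most `k` vertices. -/
theorem stmt4 {V : Type} (D : Digr V) (k : ℕ) (hD : D.DichromAtMost k) :
    ∃ lt : V → V → Prop, IsStrictTotalOrder V lt ∧
      ∀ (m : ℕ) (p : Fin m → V), D.BackwardPath lt p → m ≤ k := by
  obtain ⟨f, hf⟩ := hD
  -- arcs within a colour class
  set R : V → V → Prop := fun a b => D.Adj a b ∧ f a = f b with hR
  set T : V → V → Prop := Relation.TransGen R with hT
  have hTirr : ∀ a, ¬ T a a := by
    intro a ha
    obtain ⟨n, hn, w, hw0, hwn, harc⟩ := transGen_to_walk ha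
    -- colours along the walk are constant
    have hcol : ∀ i ≤ n, f (w i) = f a := by
      intro i hi
      induction i with
      | zero => rw [hw0]
      | succ j IHj =>
        have hj : j < n := hi
        have := (harc j hj).2
        rw [← this]
        exact IHj (le_of_lt hj)
    refine no_closed_walk D {v | f v = f a} (hf (f a))
      (fun x y => D.Adj x y ∧ f x = f a ∧ f y = f a)
      (fun x y h => ⟨h.1, h.2.1⟩) n hn w ?_ (by rw [hw0, hwn])
    intro i hi
    exact ⟨(harc i hi).1, hcol i (le_of_lt hi), hcol (i + 1) hi⟩
  -- extend to a partial order, then a linear order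
  set r : V → V → Prop := fun a b => T a b ∨ a = b with hr
  haveI : IsPartialOrder V r := by
    refine { refl := fun a => Or.inr rfl, trans := fun a b c hab hbc => ?_,
             antisymm := fun a b hab hba => ?_ }
    · rcases hab with h | h
      · rcases hbc with h' | h'
        · exact Or.inl (h.trans h')
        · exact Or.inl (h' ▸ h)
      · exact h ▸ hbc
    · rcases hab with h | h
      · rcases hba with h' | h'
        · exact absurd (h.trans h') (hTirr a)
        · exact h'.symm
      · exact h
  obtain ⟨s, hs, hrs⟩ := extend_partialOrder r
  set s' : V → V → Prop := fun a b => s a b ∧ a ≠ b with hs'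
  have hs'asymm : ∀ a b, s' a b → s' b a → False := by
    intro a b h1 h2
    exact h1.2 (hs.toIsPartialOrder.toAntisymm.antisymm _ _ h1.1 h2.1)
  -- the final order
  refine ⟨fun u v => f u < f v ∨ (f u = f v ∧ s' u v), ?_, ?_⟩
  · refine { trichotomous := ?_, irrefl := ?_, trans := ?_ }
    · intro a b
      have tri : (f a < f b ∨ (f a = f b ∧ s' a b)) ∨ a = b ∨ (f b < f a ∨ (f b = f a ∧ s' b a)) := by
       rcases lt_trichotomy (f a) (f b) with h | h | h
       · exact Or.inl (Or.inl h)
       · by_cases hab : a = b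
         · exact Or.inr (Or.inl hab)
         · rcases hs.toTotal.total a b with h' | h'
           · exact Or.inl (Or.inr ⟨h, h', hab⟩)
           · exact Or.inr (Or.inr (Or.inr ⟨h.symm, h', Ne.symm hab⟩))
       · exact Or.inr (Or.inr (Or.inl h))
      intro h1 h2
      rcases tri with h | h | h
      · exact absurd h h1
      · exact h
      · exact absurd h h2
    · intro a h
      rcases h with h | h
      · exact lt_irrefl _ h
      · exact h.2.2 rfl
    · intro a b c hab hbc
      rcases hab with h | ⟨he, hs1⟩
      · rcases hbc with h' | ⟨he', hs1'⟩
        · exact Or.inl (h.trans h')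
        · exact Or.inl (he' ▸ h)
      · rcases hbc with h' | ⟨he', hs1'⟩
        · exact Or.inl (he ▸ h')
        · refine Or.inr ⟨he.trans he', hs.toIsPartialOrder.toIsPreorder.toIsTrans.trans _ _ _ hs1.1 hs1'.1, ?_⟩
          intro hac
          subst hac
          exact hs'asymm _ _ hs1 hs1'
  · intro m p hp
    rcases Nat.eq_zero_or_pos m with hm | hm
    · omega
    -- colours strictly decrease along the path
    have hdec : ∀ i : ℕ, ∀ h : i + 1 < m,
        f (p ⟨i + 1, h⟩) < f (p ⟨i, Nat.lt_of_succ_lt h⟩) := by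
      intro i h
      obtain ⟨hadj, hlt⟩ := hp.2 i h
      rcases hlt with h' | ⟨he, hs1⟩
      · exact h'
      · exfalso
        have hTab : T (p ⟨i, Nat.lt_of_succ_lt h⟩) (p ⟨i + 1, h⟩) :=
          Relation.TransGen.single ⟨hadj, he.symm⟩
        have hsab : s (p ⟨i, Nat.lt_of_succ_lt h⟩) (p ⟨i + 1, h⟩) := hrs _ _ (Or.inl hTab)
        exact hs'asymm _ _ hs1 ⟨hsab, hs1.2.symm⟩
    -- descend
    have key : ∀ i : ℕ, ∀ h : i < m, (f (p ⟨i, h⟩)).val + i ≤ (f (p ⟨0, hm⟩)).val := by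
      intro i
      induction i with
      | zero => intro h; simp
      | succ j IHj =>
        intro h
        have hj : j < m := Nat.lt_of_succ_lt h
        have := hdec j h
        have hlt : (f (p ⟨j + 1, h⟩)).val < (f (p ⟨j, hj⟩)).val := this
        have := IHj hj
        omega
    have h1 : m - 1 < m := by omega
    have := key (m - 1) h1
    have h2 : (f (p ⟨0, hm⟩)).val < k := (f (p ⟨0, hm⟩)).isLt
    omega
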